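/- Let f : [a,b] → [a,b] be continuous, strictly increasing on [a, x_c] and strictly decreasing on [x_c, b] (unimodal with turning point x_c). If x < y are points in [a,b] and the itineraries of x and y (sequences of L/R/C relative to x_c under iteration of f) first differ at index j, and both itineraries have no C before index j, then the number of R's among the first j symbols determines the order: if that count is even then f^j(x) < f^j(y), and if odd then f^j(x) > f^j(y). -/

import Mathlib

inductive Sym3 | L | C | R
deriving DecidableEq

/-- The itinerary of `x` under `f` relative to the turning point `xc`. -/
noncomputable def itin (f : ℝ → ℝ) (xc x : ℝ) (i : ℕ) : Sym3 :=
  if f^[i] x < xc then Sym3.L else if f^[i] x = xc then Sym3.C else Sym3.R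

/-- For a continuous unimodal map, if the itineraries of `x < y` first differ at
index `j` with no `C` before index `j`, then the parity of the number of `R`'s in
the common prefix determines the order of `f^[j] x` and `f^[j] y`. -/
theorem itinerary_parity_order (f : ℝ → ℝ) (a b xc : ℝ)
    (hxc : xc ∈ Set.Ioo a b)
    (hcont : ContinuousOn f (Set.Icc a b))
    (hmono : StrictMonoOn f (Set.Icc a xc))
    (hanti : StrictAntiOn f (Set.Icc xc b))
    (hmaps : Set.MapsTo f (Set.Icc a b) (Set.Icc a b))
    (x y : ℝ) (hx : x ∈ Set.Icc a b) (hy : y ∈ Set.Icc a b) (hxy : x < y)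
    (j : ℕ)
    (hpre : ∀ i < j, itin f xc x i = itin f xc y i)
    (hne : itin f xc x j ≠ itin f xc y j)
    (hnoC : ∀ i < j, itin f xc x i ≠ Sym3.C ∧ itin f xc y i ≠ Sym3.C) :
    (Even ((Finset.range j).filter (fun i => itin f xc x i = Sym3.R)).card →
      f^[j] x < f^[j] y) ∧
    (Odd ((Finset.range j).filter (fun i => itin f xc x i = Sym3.R)).card →
      f^[j] y < f^[j] x) := by
  have hmem : ∀ z ∈ Set.Icc a b, ∀ i, f^[i] z ∈ Set.Icc a b := by
    intro z hz i
    induction i with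
    | zero => simpa
    | succ n ih => rw [Function.iterate_succ_apply']; exact hmaps ih
  have key : ∀ i ≤ j,
      (Even ((Finset.range i).filter (fun k => itin f xc x k = Sym3.R)).card →
        f^[i] x < f^[i] y) ∧
      (Odd ((Finset.range i).filter (fun k => itin f xc x k = Sym3.R)).card →
        f^[i] y < f^[i] x) := by
    intro i hi
    induction i with
    | zero =>
      constructor
      · intro _; simpa using hxy
      · intro h; simp at h
    | succ n ih =>
      have hnj : n < j := Nat.lt_of_succ_le hi
      obtain ⟨ihE, ihO⟩ := ih (le_of_lt hnj)
      have hux : f^[n] x ∈ Set.Icc a b := hmem x hx n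
      have huy : f^[n] y ∈ Set.Icc a b := hmem y hy n
      have hsx : f^[n+1] x = f (f^[n] x) := Function.iterate_succ_apply' f n x
      have hsy : f^[n+1] y = f (f^[n] y) := Function.iterate_succ_apply' f n y
      have hpn := hpre n hnj
      have hCn := hnoC n hnj
      rcases hL : itin f xc x n with _ | _ | _
      · -- L case: both below xc
        have hxL : f^[n] x < xc := by
          by_contra h
          simp only [itin, if_neg h] at hL
          split at hL <;> simp at hL
        have hyL : f^[n] y < xc := by
          have : itin f xc y n = Sym3.L := by rw [← hpn, hL]
          by_contra h
          simp only [itin, if_neg h] at this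
          split at this <;> simp at this
        have hxm : f^[n] x ∈ Set.Icc a xc := ⟨hux.1, le_of_lt hxL⟩
        have hym : f^[n] y ∈ Set.Icc a xc := ⟨huy.1, le_of_lt hyL⟩
        have hcard : ((Finset.range (n+1)).filter (fun k => itin f xc x k = Sym3.R)).card
            = ((Finset.range n).filter (fun k => itin f xc x k = Sym3.R)).card := by
          rw [Finset.range_add_one, Finset.filter_insert, if_neg (by simp [hL])]
        rw [hcard, hsx, hsy]
        exact ⟨fun h => hmono hxm hym (ihE h), fun h => hmono hym hxm (ihO h)⟩
      · exact absurd hL hCn.1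
      · -- R case: both above xc
        have hxR : xc < f^[n] x := by
          by_contra h
          rcases lt_or_eq_of_le (not_lt.mp h) with h' | h'
          · simp [itin, h'] at hL
          · simp [itin, h', lt_irrefl] at hL
        have hyR : xc < f^[n] y := by
          have hR : itin f xc y n = Sym3.R := by rw [← hpn, hL]
          by_contra h
          rcases lt_or_eq_of_le (not_lt.mp h) with h' | h'
          · simp [itin, h'] at hR
          · simp [itin, h', lt_irrefl] at hR
        have hxm : f^[n] x ∈ Set.Icc xc b := ⟨le_of_lt hxR, hux.2⟩
        have hym : f^[n] y ∈ Set.Icc xc b := ⟨le_of_lt hyR, huy.2⟩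
        have hcard : ((Finset.range (n+1)).filter (fun k => itin f xc x k = Sym3.R)).card
            = ((Finset.range n).filter (fun k => itin f xc x k = Sym3.R)).card + 1 := by
          rw [Finset.range_add_one, Finset.filter_insert, if_pos (by simp [hL]),
            Finset.card_insert_of_notMem (by simp)]
        rw [hcard, hsx, hsy]
        constructor
        · intro h
          exact hanti hym hxm (ihO (Nat.not_even_iff_odd.mp (Nat.even_add_one.mp h)))
        · intro h
          exact hanti hxm hym (ihE (Nat.not_odd_iff_even.mp (Nat.odd_add_one.mp h)))
  exact key j le_rfl
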